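/- There exists a subfield K of the field of complex numbers ℂ together with a linear order on K making K a linearly ordered field (with the ring operations inherited from ℂ) which is not Archimedean; consequently K, and hence ℂ, contains a nonzero element x with |x| < 1/n for every positive natural number n with respect to that order. -/

import Mathlib

open Cardinal Hyperreal

/-- The hyperreal numbers have cardinality continuum. -/
theorem hyperreal_cardinalMk : #(ℝ*) = 𝔠 := by
  apply le_antisymm
  · have h1 : #(ℝ*) ≤ #(ℕ → ℝ) := by
      apply Cardinal.mk_le_of_surjective
        (f := fun f : ℕ → ℝ => ((f : Filter.Germ (Filter.hyperfilter ℕ : Filter ℕ) ℝ) : ℝ*))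
      exact fun g => Quotient.inductionOn g fun f => ⟨f, rfl⟩
    refine h1.trans ?_
    rw [Cardinal.mk_arrow, Cardinal.mk_real, Cardinal.mk_nat, Cardinal.lift_aleph0,
      Cardinal.lift_continuum, ← Cardinal.two_power_aleph0, ← Cardinal.power_mul,
      Cardinal.aleph0_mul_aleph0, Cardinal.two_power_aleph0]
  · rw [← Cardinal.mk_real]
    exact Cardinal.mk_le_of_injective (f := fun x : ℝ => (x : ℝ*))
      fun x y h => Hyperreal.coe_eq_coe.mp h

/-- The field of complex numbers contains a non-Archimedean totally ordered subfield:
there is a subfield `K` of `ℂ` and a linear order on `K` making `K` (with the ring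
operations inherited from `ℂ`) a linearly ordered field which is not Archimedean;
consequently `K` (and hence `ℂ`) contains a nonzero element `x` with `|x| < 1/n` for
every positive natural number `n`, with respect to that order. -/
theorem complex_contains_nonArchimedean_subfield :
    ∃ (K : Subfield ℂ) (LO : LinearOrder ↥K),
      (∀ a b c : ↥K, LO.lt a b → LO.lt (a + c) (b + c)) ∧
      (∀ a b : ↥K, LO.lt 0 a → LO.lt 0 b → LO.lt 0 (a * b)) ∧
      (¬ ∀ x : ↥K, ∃ n : ℕ, LO.le x (n : ↥K)) ∧
      ∃ x : ↥K, x ≠ 0 ∧ ∀ n : ℕ, 0 < n → LO.lt (LO.max (-x) x) (1 / (n : ↥K)) := by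
  classical
  -- the algebraic closure of the hyperreals is isomorphic to `ℂ`
  set A := AlgebraicClosure ℝ* with hAdef
  have halg : Function.Injective (algebraMap ℝ* A) := (algebraMap ℝ* A).injective
  have hA : #A = 𝔠 := by
    apply le_antisymm
    · refine (Algebra.IsAlgebraic.cardinalMk_le_max ℝ* A).trans ?_
      rw [hyperreal_cardinalMk]
      exact max_le le_rfl Cardinal.aleph0_le_continuum
    · rw [← hyperreal_cardinalMk]
      exact Cardinal.mk_le_of_injective halg
  haveI : CharZero A := charZero_of_injective_algebraMap halg
  obtain ⟨e⟩ := IsAlgClosed.ringEquiv_of_equiv_of_charZero (K := A) (L := ℂ)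
    (by rw [hA]; exact Cardinal.aleph0_lt_continuum) (Cardinal.eq.mp (by rw [hA, mk_complex]))
  -- the embedding of the hyperreals into `ℂ`
  set F : ℝ* →+* ℂ := e.toRingHom.comp (algebraMap ℝ* A) with hF
  refine ⟨F.fieldRange, ?_⟩
  have hinj : Function.Injective F.rangeRestrictField := by
    intro a b h
    apply F.injective
    rw [← F.coe_rangeRestrictField a, ← F.coe_rangeRestrictField b, h]
  have hsurj : Function.Surjective F.rangeRestrictField := by
    rintro ⟨y, hy⟩
    obtain ⟨x, rfl⟩ := RingHom.mem_fieldRange.mp hy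
    exact ⟨x, Subtype.ext (F.coe_rangeRestrictField x)⟩
  let ψ : ℝ* ≃+* F.fieldRange := RingEquiv.ofBijective F.rangeRestrictField ⟨hinj, hsurj⟩
  let φ : (F.fieldRange : Subfield ℂ) ≃+* ℝ* := ψ.symm
  letI LO : LinearOrder ↥F.fieldRange := LinearOrder.lift' (φ : F.fieldRange → ℝ*) φ.injective
  have hlt : ∀ a b : ↥F.fieldRange, LO.lt a b ↔ φ a < φ b := fun _ _ => Iff.rfl
  have hle : ∀ a b : ↥F.fieldRange, LO.le a b ↔ φ a ≤ φ b := fun _ _ => Iff.rfl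
  refine ⟨LO, ?_, ?_, ?_, ?_⟩
  · intro a b c h
    rw [hlt] at h ⊢
    rw [map_add, map_add]
    exact add_lt_add_left h _
  · intro a b ha hb
    rw [hlt] at ha hb ⊢
    rw [map_zero] at ha hb ⊢
    rw [map_mul]
    exact mul_pos ha hb
  · intro h
    obtain ⟨n, hn⟩ := h (ψ ω)
    rw [hle, RingEquiv.symm_apply_apply, map_natCast] at hn
    have : (n : ℝ*) < ω := by
      have := infinitePos_omega (n : ℝ)
      exact_mod_cast this
    exact absurd hn (not_le.mpr this)
  · refine ⟨ψ ε, ?_, ?_⟩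
    · intro h
      apply epsilon_ne_zero
      have := congrArg φ h
      rwa [RingEquiv.symm_apply_apply, map_zero] at this
    · intro n hn
      have hn' : (0 : ℝ*) < (n : ℝ*) := by exact_mod_cast hn
      have key : ∀ y : ℝ*, y < 1 / (n : ℝ*) → LO.lt (ψ y) (1 / (n : F.fieldRange)) := by
        intro y hy
        rw [hlt, RingEquiv.symm_apply_apply, map_div₀, map_one, map_natCast]
        exact hy
      have h1 : LO.lt (-(ψ ε)) (1 / (n : F.fieldRange)) := by
        rw [← map_neg ψ ε]
        apply key
        refine lt_trans ?_ (by positivity)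
        simpa using epsilon_pos
      have h2 : LO.lt (ψ ε) (1 / (n : F.fieldRange)) := by
        apply key
        have heps := epsilon_lt_pos (r := 1 / (n : ℝ)) (by positivity)
        have hcast : ((1 / (n : ℝ) : ℝ) : ℝ*) = 1 / (n : ℝ*) := by norm_cast
        rwa [hcast] at heps
      exact @max_lt _ LO _ _ _ h1 h2
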